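/- For every integer n ≥ 2, every real x with 0 ≤ x < 1 and every θ ∈ ℝ, one has V_n(x,θ) = (1/π)·∫₀¹ ((1−τ)τ)^{−1/2} · (1 − x²τ)^{−1/2} · (1 − (xτ)^{2n})/(1 + (xτ)^{2n} − 2(xτ)^n·cos(nθ)) dτ. -/

import Mathlib

/-- `δ_n = (1/(4n))·∑_{l=1}^{n−1} 1/sin(πl/n) − 1`. -/
noncomputable def deltaN (n : ℕ) : ℝ :=
  (1 / (4 * (n : ℝ))) * ∑ l ∈ Finset.Icc 1 (n - 1), 1 / Real.sin (Real.pi * l / n) - 1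

/-- `h_n(x,θ) = (1/n)·∑_{l=1}^{n} (1 − x·cos(2πl/n + θ))/(1 + x² − 2x·cos(2πl/n + θ))^{3/2}`. -/
noncomputable def hN (n : ℕ) (x θ : ℝ) : ℝ :=
  (1 / (n : ℝ)) * ∑ l ∈ Finset.Icc 1 n,
    (1 - x * Real.cos (2 * Real.pi * l / n + θ)) /
      (1 + x ^ 2 - 2 * x * Real.cos (2 * Real.pi * l / n + θ)) ^ ((3 : ℝ) / 2)

/-- `k_n(x,θ) = h_n(x,θ) − 1`. -/
noncomputable def kN (n : ℕ) (x θ : ℝ) : ℝ := hN n x θ - 1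

/-- `V_n(x,θ) = (1/n)·∑_{j=1}^{n} (1 + x² − 2x·cos(2πj/n + θ))^{−1/2}`. -/
noncomputable def VN (n : ℕ) (x θ : ℝ) : ℝ :=
  (1 / (n : ℝ)) * ∑ j ∈ Finset.Icc 1 n,
    (1 + x ^ 2 - 2 * x * Real.cos (2 * Real.pi * j / n + θ)) ^ (-(1 : ℝ) / 2)

open Real MeasureTheory intervalIntegral Finset Set Complex

namespace VNaux

lemma rpow_neg_half_eq {a : ℝ} (ha : 0 ≤ a) : a ^ (-(1:ℝ)/2) = (Real.sqrt a)⁻¹ := by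
  rw [neg_div, Real.rpow_neg ha, Real.sqrt_eq_rpow]

/-- Sum of geometric-type inverses over roots of unity. -/
lemma sum_inv_one_sub_mul (n : ℕ) (hn : n ≠ 0) (w : ℂ) (hw : ‖w‖ < 1) :
    ∑ j ∈ Finset.range n, (1 - w * Complex.exp (2 * Real.pi * Complex.I / n) ^ j)⁻¹
      = n / (1 - w ^ n) := by
  set ζ := Complex.exp (2 * Real.pi * Complex.I / n) with hζ
  have hprim : IsPrimitiveRoot ζ n := Complex.isPrimitiveRoot_exp n hn
  have hζ1 : ‖ζ‖ = 1 := by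
    have : (2 * (Real.pi : ℂ) * Complex.I / (n : ℂ)) = ((2 * Real.pi / n : ℝ) : ℂ) * Complex.I := by
      push_cast; ring
    rw [hζ, this]
    exact Complex.norm_exp_ofReal_mul_I _
  have hwj : ∀ j : ℕ, ‖w * ζ ^ j‖ < 1 := by
    intro j
    rw [norm_mul, norm_pow, hζ1, one_pow, mul_one]
    exact hw
  have hwn : ‖w ^ n‖ < 1 := by
    rw [norm_pow]
    exact pow_lt_one₀ (norm_nonneg w) hw hn
  calc ∑ j ∈ Finset.range n, (1 - w * ζ ^ j)⁻¹
      = ∑ j ∈ Finset.range n, ∑' k : ℕ, (w * ζ ^ j) ^ k := by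
        refine Finset.sum_congr rfl fun j _ => ?_
        exact (tsum_geometric_of_norm_lt_one (hwj j)).symm
    _ = ∑' k : ℕ, ∑ j ∈ Finset.range n, (w * ζ ^ j) ^ k := by
        exact (Summable.tsum_finsetSum fun j _ => summable_geometric_of_norm_lt_one (hwj j)).symm
    _ = ∑' k : ℕ, (if n ∣ k then (n : ℂ) * w ^ k else 0) := by
        refine tsum_congr fun k => ?_
        have h1 : ∑ j ∈ Finset.range n, (w * ζ ^ j) ^ k
            = w ^ k * ∑ j ∈ Finset.range n, (ζ ^ k) ^ j := by
          rw [Finset.mul_sum]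
          refine Finset.sum_congr rfl fun j _ => ?_
          rw [mul_pow, ← pow_mul, ← pow_mul, mul_comm j k]
        rw [h1]
        by_cases h : n ∣ k
        · rw [if_pos h]
          have : ζ ^ k = 1 := (hprim.pow_eq_one_iff_dvd k).2 h
          simp [this, mul_comm]
        · rw [if_neg h]
          have hne : ζ ^ k ≠ 1 := fun hh => h ((hprim.pow_eq_one_iff_dvd k).1 hh)
          rw [geom_sum_eq hne]
          have : (ζ ^ k) ^ n = 1 := by
            rw [← pow_mul, mul_comm, pow_mul, hprim.pow_eq_one, one_pow]
          simp [this]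
    _ = ∑' m : ℕ, (n : ℂ) * (w ^ n) ^ m := by
        have hinj : Function.Injective (fun m : ℕ => n * m) := by
          intro a b h
          exact Nat.eq_of_mul_eq_mul_left (Nat.pos_of_ne_zero hn) h
        have hsupp : Function.support (fun k : ℕ => if n ∣ k then (n : ℂ) * w ^ k else 0)
            ⊆ Set.range (fun m : ℕ => n * m) := by
          intro k hk
          by_cases h : n ∣ k
          · obtain ⟨m, hm⟩ := h
            exact ⟨m, hm.symm⟩
          · simp [h] at hk
        have := hinj.tsum_eq (f := fun k : ℕ => if n ∣ k then (n : ℂ) * w ^ k else 0) hsupp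
        rw [← this]
        refine tsum_congr fun m => ?_
        have : n ∣ n * m := Dvd.intro m rfl
        simp only [this, if_true, pow_mul]
    _ = (n : ℂ) * (1 - w ^ n)⁻¹ := by
        rw [tsum_mul_left, tsum_geometric_of_norm_lt_one hwn]
    _ = n / (1 - w ^ n) := (div_eq_mul_inv _ _).symm

/-- Real part of the Poisson kernel. -/
lemma re_inv_poisson (r φ : ℝ) (hr0 : 0 ≤ r) (hr1 : r < 1) :
    2 * (((1 : ℂ) - (r : ℂ) * Complex.exp ((φ : ℂ) * Complex.I))⁻¹).re - 1
      = (1 - r ^ 2) / (1 + r ^ 2 - 2 * r * Real.cos φ) := by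
  have hre : ((1 : ℂ) - (r : ℂ) * Complex.exp ((φ : ℂ) * Complex.I)).re = 1 - r * Real.cos φ := by
    simp [Complex.sub_re, Complex.mul_re, Complex.exp_ofReal_mul_I_re, Complex.exp_ofReal_mul_I_im]
  have him : ((1 : ℂ) - (r : ℂ) * Complex.exp ((φ : ℂ) * Complex.I)).im = -(r * Real.sin φ) := by
    simp [Complex.sub_im, Complex.mul_im, Complex.exp_ofReal_mul_I_re, Complex.exp_ofReal_mul_I_im]
  have hden : Complex.normSq ((1 : ℂ) - (r : ℂ) * Complex.exp ((φ : ℂ) * Complex.I))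
      = 1 + r ^ 2 - 2 * r * Real.cos φ := by
    rw [Complex.normSq_apply, hre, him]
    nlinarith [Real.sin_sq_add_cos_sq φ]
  have hpos : 0 < 1 + r ^ 2 - 2 * r * Real.cos φ := by
    have h1 : 0 < (1 - r) ^ 2 := pow_pos (by linarith) 2
    nlinarith [mul_nonneg hr0 (sub_nonneg.2 (Real.cos_le_one φ))]
  rw [Complex.inv_re, hre, hden]
  field_simp
  ring

lemma poisson_sum (n : ℕ) (hn : n ≠ 0) (r θ : ℝ) (hr0 : 0 ≤ r) (hr1 : r < 1) :
    ∑ j ∈ Finset.Icc 1 n, (1 - r ^ 2) / (1 + r ^ 2 - 2 * r * Real.cos (2 * Real.pi * j / n + θ))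
      = n * ((1 - r ^ (2 * n)) / (1 + r ^ (2 * n) - 2 * r ^ n * Real.cos (n * θ))) := by
  have hnC : (n : ℂ) ≠ 0 := Nat.cast_ne_zero.2 hn
  have key : ∑ j ∈ Finset.Icc 1 n,
      ((1 : ℂ) - (r : ℂ) * Complex.exp ((((2 * Real.pi * j / n + θ) : ℝ) : ℂ) * Complex.I))⁻¹
      = (n : ℂ) / (1 - ((r ^ n : ℝ) : ℂ) * Complex.exp (((n * θ : ℝ) : ℂ) * Complex.I)) := by
    rw [show Finset.Icc 1 n = Finset.Ico 1 (n+1) from by rw [Finset.Ico_add_one_right_eq_Icc],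
      Finset.sum_Ico_eq_sum_range]
    simp only [Nat.add_sub_cancel]
    set w : ℂ := (r : ℂ) * Complex.exp ((((2 * Real.pi / n + θ) : ℝ) : ℂ) * Complex.I) with hw
    have hwnorm : ‖w‖ < 1 := by
      rw [hw, norm_mul, Complex.norm_real, Real.norm_eq_abs, _root_.abs_of_nonneg hr0,
        Complex.norm_exp_ofReal_mul_I, mul_one]
      exact hr1
    have hterm : ∀ i ∈ Finset.range n,
        ((1 : ℂ) - (r : ℂ) * Complex.exp ((((2 * Real.pi * (1 + i : ℕ) / n + θ) : ℝ) : ℂ) * Complex.I))⁻¹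
        = (1 - w * Complex.exp (2 * Real.pi * Complex.I / n) ^ i)⁻¹ := by
      intro i _
      have hexp : ((((2 * Real.pi * (1 + i : ℕ) / n + θ) : ℝ) : ℂ) * Complex.I)
          = (((2 * Real.pi / n + θ : ℝ)) : ℂ) * Complex.I
            + (i : ℂ) * (2 * (Real.pi : ℂ) * Complex.I / (n : ℂ)) := by
        push_cast
        field_simp
        ring
      conv_rhs => rw [hw, mul_assoc, ← Complex.exp_nat_mul, ← Complex.exp_add]
      rw [hexp]
    rw [Finset.sum_congr rfl hterm, sum_inv_one_sub_mul n hn w hwnorm]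
    congr 2
    rw [hw, mul_pow, ← Complex.exp_nat_mul]
    have : (n : ℂ) * ((((2 * Real.pi / n + θ) : ℝ) : ℂ) * Complex.I)
        = 2 * Real.pi * Complex.I + (((n * θ : ℝ) : ℂ) * Complex.I) := by
      push_cast
      field_simp
    rw [this, Complex.exp_add, Complex.exp_two_pi_mul_I, one_mul]
    push_cast
    ring
  have hrn0 : 0 ≤ r ^ n := pow_nonneg hr0 n
  have hrn1 : r ^ n < 1 := pow_lt_one₀ hr0 hr1 hn
  calc ∑ j ∈ Finset.Icc 1 n, (1 - r ^ 2) / (1 + r ^ 2 - 2 * r * Real.cos (2 * Real.pi * j / n + θ))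
      = ∑ j ∈ Finset.Icc 1 n, (2 * (((1 : ℂ) - (r : ℂ) *
          Complex.exp ((((2 * Real.pi * j / n + θ) : ℝ) : ℂ) * Complex.I))⁻¹).re - 1) := by
        refine Finset.sum_congr rfl fun j _ => ?_
        rw [re_inv_poisson r _ hr0 hr1]
    _ = 2 * (∑ j ∈ Finset.Icc 1 n,
          ((1 : ℂ) - (r : ℂ) * Complex.exp ((((2 * Real.pi * j / n + θ) : ℝ) : ℂ) * Complex.I))⁻¹).re
          - n := by
        rw [Finset.sum_sub_distrib, Finset.sum_const, Nat.card_Icc]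
        simp only [Nat.add_sub_cancel, nsmul_eq_mul, mul_one]
        rw [Complex.re_sum, Finset.mul_sum]
    _ = 2 * ((n : ℂ) / (1 - ((r ^ n : ℝ) : ℂ) * Complex.exp (((n * θ : ℝ) : ℂ) * Complex.I))).re
          - n := by rw [key]
    _ = n * (2 * (((1 : ℂ) - ((r ^ n : ℝ) : ℂ) *
          Complex.exp (((n * θ : ℝ) : ℂ) * Complex.I))⁻¹).re - 1) := by
        rw [div_eq_mul_inv, show ((n : ℂ)) = (((n : ℝ)) : ℂ) by push_cast; ring,
          Complex.re_ofReal_mul]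
        ring
    _ = n * ((1 - (r ^ n) ^ 2) / (1 + (r ^ n) ^ 2 - 2 * r ^ n * Real.cos (n * θ))) := by
        rw [re_inv_poisson (r ^ n) (n * θ) hrn0 hrn1]
    _ = n * ((1 - r ^ (2 * n)) / (1 + r ^ (2 * n) - 2 * r ^ n * Real.cos (n * θ))) := by
        rw [← pow_mul, Nat.mul_comm]

/-- The integrand of the per-angle integral representation. -/
noncomputable def F (x c τ : ℝ) : ℝ :=
  (Real.sqrt ((1 - τ) * τ))⁻¹ * (Real.sqrt (1 - x ^ 2 * τ))⁻¹ *
    ((1 - x ^ 2 * τ ^ 2) / (1 + x ^ 2 * τ ^ 2 - 2 * (x * c) * τ))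

lemma q_pos {x c : ℝ} (hx0 : 0 ≤ x) (hx1 : x < 1) (hc1 : -1 ≤ c) (hc2 : c ≤ 1)
    {τ : ℝ} (hτ0 : 0 ≤ τ) (hτ1 : τ ≤ 1) : 0 < 1 + x ^ 2 * τ ^ 2 - 2 * (x * c) * τ := by
  have hxτ : x * τ < 1 := by nlinarith
  have h1 : 0 < (1 - x * τ) ^ 2 := pow_pos (by linarith) 2
  nlinarith [mul_nonneg (mul_nonneg hx0 hτ0) (sub_nonneg.2 hc2)]

lemma D_pos {x c : ℝ} (hx0 : 0 ≤ x) (hx1 : x < 1) (hc1 : -1 ≤ c) (hc2 : c ≤ 1) :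
    0 < 1 + x ^ 2 - 2 * x * c := by
  have := q_pos (τ := 1) hx0 hx1 hc1 hc2 zero_le_one le_rfl
  nlinarith [this]

lemma F_nonneg {x c : ℝ} (hx0 : 0 ≤ x) (hx1 : x < 1) (hc1 : -1 ≤ c) (hc2 : c ≤ 1)
    {τ : ℝ} (hτ0 : 0 ≤ τ) (hτ1 : τ ≤ 1) : 0 ≤ F x c τ := by
  have hq := q_pos hx0 hx1 hc1 hc2 hτ0 hτ1
  have hxτ : x * τ < 1 := by nlinarith
  have hxτ0 : 0 ≤ x * τ := mul_nonneg hx0 hτ0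
  have hN : 0 ≤ 1 - x ^ 2 * τ ^ 2 := by nlinarith
  have := Real.sqrt_nonneg ((1 - τ) * τ)
  have := Real.sqrt_nonneg (1 - x ^ 2 * τ)
  exact mul_nonneg (mul_nonneg (inv_nonneg.2 ‹0 ≤ Real.sqrt ((1 - τ) * τ)›)
    (inv_nonneg.2 ‹0 ≤ Real.sqrt (1 - x ^ 2 * τ)›)) (div_nonneg hN hq.le)

set_option maxHeartbeats 1000000 in
lemma key_integrable (x c : ℝ) (hx0 : 0 ≤ x) (hx1 : x < 1) (hc1 : -1 ≤ c) (hc2 : c ≤ 1) :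
    IntervalIntegrable (F x c) volume 0 1 := by
  have hx2 : x ^ 2 < 1 := by nlinarith
  have hFcontOn : ∀ τ : ℝ, 0 < τ → τ < 1 → ContinuousAt (F x c) τ := by
    intro τ ht0 ht1
    have hR1 : 0 < (1 - τ) * τ := mul_pos (by linarith) ht0
    have hR2 : 0 < 1 - x ^ 2 * τ := by nlinarith
    have hq : 0 < 1 + x ^ 2 * τ ^ 2 - 2 * (x * c) * τ := q_pos hx0 hx1 hc1 hc2 ht0.le ht1.le
    unfold F
    apply ContinuousAt.mul
    apply ContinuousAt.mul
    · exact (Real.continuous_sqrt.continuousAt.comp (by fun_prop)).inv₀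
        (Real.sqrt_pos.2 hR1).ne'
    · exact (Real.continuous_sqrt.continuousAt.comp (by fun_prop)).inv₀
        (Real.sqrt_pos.2 hR2).ne'
    · exact ContinuousAt.div (by fun_prop) (by fun_prop) hq.ne'
  have h1 : IntervalIntegrable (F x c) volume 0 (1/2) := by
    rw [intervalIntegrable_iff_integrableOn_Ioc_of_le (by norm_num)]
    have hmeas : AEStronglyMeasurable (F x c) (volume.restrict (Set.Ioc 0 (1/2:ℝ))) := by
      apply ContinuousOn.aestronglyMeasurable _ measurableSet_Ioc
      intro τ hτ
      exact (hFcontOn τ hτ.1 (lt_of_le_of_lt hτ.2 (by norm_num))).continuousWithinAt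
    have hbase : IntervalIntegrable (fun τ : ℝ => 16 * τ ^ (-(1:ℝ)/2)) volume 0 (1/2) :=
      (intervalIntegrable_rpow' (by norm_num)).const_mul 16
    rw [intervalIntegrable_iff_integrableOn_Ioc_of_le (by norm_num)] at hbase
    have hbound_int : IntegrableOn (fun τ : ℝ => 16 * (Real.sqrt τ)⁻¹)
        (Set.Ioc 0 (1/2:ℝ)) volume := by
      apply hbase.congr_fun _ measurableSet_Ioc
      intro τ hτ
      show 16 * τ ^ (-(1:ℝ)/2) = 16 * (Real.sqrt τ)⁻¹
      rw [rpow_neg_half_eq hτ.1.le]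
    apply hbound_int.mono' hmeas
    filter_upwards [ae_restrict_mem measurableSet_Ioc] with τ hτ
    obtain ⟨ht0, ht12⟩ := hτ
    have ht1 : τ ≤ 1 := ht12.trans (by norm_num)
    have hq : 0 < 1 + x ^ 2 * τ ^ 2 - 2 * (x * c) * τ := q_pos hx0 hx1 hc1 hc2 ht0.le ht1
    rw [Real.norm_of_nonneg (F_nonneg hx0 hx1 hc1 hc2 ht0.le ht1)]
    have hst : 0 < Real.sqrt τ := Real.sqrt_pos.2 ht0
    have hhalf : Real.sqrt τ / 2 ≤ Real.sqrt ((1 - τ) * τ) := by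
      have e : Real.sqrt τ / 2 = Real.sqrt (τ / 4) := by
        rw [show τ / 4 = τ * (1/4) by ring, Real.sqrt_mul ht0.le,
          show Real.sqrt (1/4 : ℝ) = 1/2 by
            rw [show (1/4:ℝ) = (1/2)^2 by norm_num, Real.sqrt_sq (by norm_num)]]
        ring
      rw [e]
      exact Real.sqrt_le_sqrt (by nlinarith)
    have ha : (Real.sqrt ((1 - τ) * τ))⁻¹ ≤ 2 * (Real.sqrt τ)⁻¹ := by
      rw [show 2 * (Real.sqrt τ)⁻¹ = (Real.sqrt τ / 2)⁻¹ by
        rw [div_eq_mul_inv, mul_inv, inv_inv]; ring]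
      exact inv_anti₀ (by positivity) hhalf
    have hb : (Real.sqrt (1 - x ^ 2 * τ))⁻¹ ≤ 2 := by
      have h14 : (1/2:ℝ) ≤ Real.sqrt (1 - x ^ 2 * τ) := by
        rw [show (1/2:ℝ) = Real.sqrt ((1/2)^2) from (Real.sqrt_sq (by norm_num)).symm]
        apply Real.sqrt_le_sqrt
        nlinarith
      calc (Real.sqrt (1 - x ^ 2 * τ))⁻¹ ≤ (1/2:ℝ)⁻¹ := inv_anti₀ (by norm_num) h14
        _ = 2 := by norm_num
    have hNq : (1 - x ^ 2 * τ ^ 2) / (1 + x ^ 2 * τ ^ 2 - 2 * (x * c) * τ) ≤ 4 := by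
      have hxτ : x * τ ≤ 1/2 := by nlinarith
      have hq4 : (1/4:ℝ) ≤ 1 + x ^ 2 * τ ^ 2 - 2 * (x * c) * τ := by
        nlinarith [mul_nonneg (sub_nonneg.2 hxτ) (by linarith : (0:ℝ) ≤ 3/2 - x * τ),
          mul_nonneg (mul_nonneg hx0 ht0.le) (sub_nonneg.2 hc2)]
      calc (1 - x ^ 2 * τ ^ 2) / (1 + x ^ 2 * τ ^ 2 - 2 * (x * c) * τ)
          ≤ 1 / (1/4:ℝ) := div_le_div₀ zero_le_one (by nlinarith) (by norm_num) hq4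
        _ = 4 := by norm_num
    have hF : F x c τ ≤ (2 * (Real.sqrt τ)⁻¹) * 2 * 4 := by
      unfold F
      have hN0 : 0 ≤ 1 - x ^ 2 * τ ^ 2 := by nlinarith
      apply mul_le_mul _ hNq (div_nonneg hN0 hq.le) (by positivity)
      apply mul_le_mul ha hb (by positivity) (by positivity)
    calc F x c τ ≤ (2 * (Real.sqrt τ)⁻¹) * 2 * 4 := hF
      _ = 16 * (Real.sqrt τ)⁻¹ := by ring
  have h2 : IntervalIntegrable (F x c) volume (1/2) 1 := by
    have hbx : 0 < Real.sqrt (1 - x ^ 2) := Real.sqrt_pos.2 (by nlinarith)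
    have hqx : 0 < (1 - x) ^ 2 := pow_pos (by linarith) 2
    set C2 : ℝ := 2 * (Real.sqrt (1 - x ^ 2))⁻¹ * ((1 - x) ^ 2)⁻¹ with hC2
    rw [intervalIntegrable_iff_integrableOn_Ioc_of_le (by norm_num),
      integrableOn_Ioc_iff_integrableOn_Ioo]
    have hmeas : AEStronglyMeasurable (F x c) (volume.restrict (Set.Ioo (1/2:ℝ) 1)) := by
      apply ContinuousOn.aestronglyMeasurable _ measurableSet_Ioo
      intro τ hτ
      exact (hFcontOn τ (lt_trans (by norm_num) hτ.1) hτ.2).continuousWithinAt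
    have hbase : IntervalIntegrable (fun τ : ℝ => C2 * (1 - τ) ^ (-(1:ℝ)/2)) volume (1/2) 1 := by
      have h0 : IntervalIntegrable (fun τ : ℝ => τ ^ (-(1:ℝ)/2)) volume 0 (1/2) :=
        intervalIntegrable_rpow' (by norm_num)
      have h1' := (h0.comp_sub_left 1).symm
      have e1 : (1:ℝ) - 0 = 1 := by norm_num
      have e2 : (1:ℝ) - 1/2 = 1/2 := by norm_num
      rw [e1, e2] at h1'
      exact h1'.const_mul C2
    rw [intervalIntegrable_iff_integrableOn_Ioc_of_le (by norm_num),
      integrableOn_Ioc_iff_integrableOn_Ioo] at hbase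
    have hbound_int : IntegrableOn (fun τ : ℝ => C2 * (Real.sqrt (1 - τ))⁻¹)
        (Set.Ioo (1/2:ℝ) 1) volume := by
      apply hbase.congr_fun _ measurableSet_Ioo
      intro τ hτ
      show C2 * (1 - τ) ^ (-(1:ℝ)/2) = C2 * (Real.sqrt (1 - τ))⁻¹
      rw [rpow_neg_half_eq (by linarith [hτ.2] : (0:ℝ) ≤ 1 - τ)]
    apply hbound_int.mono' hmeas
    filter_upwards [ae_restrict_mem measurableSet_Ioo] with τ hτ
    obtain ⟨ht12, ht1⟩ := hτ
    have ht0 : 0 < τ := lt_trans (by norm_num) ht12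
    have hq : 0 < 1 + x ^ 2 * τ ^ 2 - 2 * (x * c) * τ := q_pos hx0 hx1 hc1 hc2 ht0.le ht1.le
    rw [Real.norm_of_nonneg (F_nonneg hx0 hx1 hc1 hc2 ht0.le ht1.le)]
    have hst : 0 < Real.sqrt (1 - τ) := Real.sqrt_pos.2 (by linarith)
    have hhalf : Real.sqrt (1 - τ) / 2 ≤ Real.sqrt ((1 - τ) * τ) := by
      have e : Real.sqrt (1 - τ) / 2 = Real.sqrt ((1 - τ) / 4) := by
        rw [show (1 - τ) / 4 = (1 - τ) * (1/4) by ring, Real.sqrt_mul (by linarith : (0:ℝ) ≤ 1 - τ),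
          show Real.sqrt (1/4 : ℝ) = 1/2 by
            rw [show (1/4:ℝ) = (1/2)^2 by norm_num, Real.sqrt_sq (by norm_num)]]
        ring
      rw [e]
      exact Real.sqrt_le_sqrt (by nlinarith)
    have ha : (Real.sqrt ((1 - τ) * τ))⁻¹ ≤ 2 * (Real.sqrt (1 - τ))⁻¹ := by
      rw [show 2 * (Real.sqrt (1 - τ))⁻¹ = (Real.sqrt (1 - τ) / 2)⁻¹ by
        rw [div_eq_mul_inv, mul_inv, inv_inv]; ring]
      exact inv_anti₀ (by positivity) hhalf
    have hb : (Real.sqrt (1 - x ^ 2 * τ))⁻¹ ≤ (Real.sqrt (1 - x ^ 2))⁻¹ := by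
      apply inv_anti₀ hbx
      apply Real.sqrt_le_sqrt
      nlinarith
    have hNq : (1 - x ^ 2 * τ ^ 2) / (1 + x ^ 2 * τ ^ 2 - 2 * (x * c) * τ)
        ≤ 1 / (1 - x) ^ 2 := by
      have hxτx : x * τ ≤ x := by nlinarith
      have hq4 : (1 - x) ^ 2 ≤ 1 + x ^ 2 * τ ^ 2 - 2 * (x * c) * τ := by
        nlinarith [mul_nonneg (mul_nonneg hx0 ht0.le) (sub_nonneg.2 hc2),
          mul_nonneg (sub_nonneg.2 hxτx) (by nlinarith : (0:ℝ) ≤ (1 - x * τ) + (1 - x))]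
      exact div_le_div₀ zero_le_one (by nlinarith) hqx hq4
    have hF : F x c τ ≤ (2 * (Real.sqrt (1 - τ))⁻¹) * (Real.sqrt (1 - x ^ 2))⁻¹
        * (1 / (1 - x) ^ 2) := by
      unfold F
      have hN0 : 0 ≤ 1 - x ^ 2 * τ ^ 2 := by nlinarith
      apply mul_le_mul _ hNq (div_nonneg hN0 hq.le) (by positivity)
      apply mul_le_mul ha hb (by positivity) (by positivity)
    calc F x c τ ≤ (2 * (Real.sqrt (1 - τ))⁻¹) * (Real.sqrt (1 - x ^ 2))⁻¹
        * (1 / (1 - x) ^ 2) := hF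
      _ = C2 * (Real.sqrt (1 - τ))⁻¹ := by rw [hC2]; ring
  exact h1.trans h2

set_option maxHeartbeats 1000000 in
lemma key_integral (x c : ℝ) (hx0 : 0 ≤ x) (hx1 : x < 1) (hc1 : -1 ≤ c) (hc2 : c ≤ 1) :
    ∫ τ in (0:ℝ)..1, F x c τ = Real.pi * (Real.sqrt (1 + x ^ 2 - 2 * x * c))⁻¹ := by
  have hD : 0 < 1 + x ^ 2 - 2 * x * c := D_pos hx0 hx1 hc1 hc2
  set D : ℝ := 1 + x ^ 2 - 2 * x * c with hDdef
  set q : ℝ → ℝ := fun τ => 1 + x ^ 2 * τ ^ 2 - 2 * (x * c) * τ with hqdef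
  set G : ℝ → ℝ := fun τ => (Real.sqrt D)⁻¹ * Real.arcsin (2 * D * τ / q τ - 1) with hGdef
  clear_value D q G
  have hsD : 0 < Real.sqrt D := Real.sqrt_pos.2 hD
  have hqpos : ∀ τ ∈ Set.Icc (0:ℝ) 1, 0 < q τ := by
    intro τ hτ
    simp only [hqdef]
    exact q_pos hx0 hx1 hc1 hc2 hτ.1 hτ.2
  have hqcont : Continuous q := by
    rw [hqdef]; continuity
  have hcont : ContinuousOn G (Set.Icc 0 1) := by
    rw [hGdef]
    apply ContinuousOn.mul continuousOn_const
    apply Real.continuous_arcsin.comp_continuousOn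
    apply ContinuousOn.sub _ continuousOn_const
    exact ContinuousOn.div (by fun_prop) hqcont.continuousOn
      (fun τ hτ => (hqpos τ hτ).ne')
  have hderiv : ∀ τ ∈ Set.Ioo (0:ℝ) 1, HasDerivWithinAt G (F x c τ) (Set.Ioi τ) τ := by
    intro τ hτ
    obtain ⟨ht0, ht1⟩ := hτ
    have hqτ : 0 < q τ := hqpos τ ⟨ht0.le, ht1.le⟩
    have hR1 : 0 < (1 - τ) * τ := mul_pos (by linarith) ht0
    have hR2 : 0 < 1 - x ^ 2 * τ := by nlinarith
    have hid1 : 1 - (2 * D * τ / q τ - 1) = 2 * ((1 - τ) * (1 - x ^ 2 * τ)) / q τ := by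
      have hqτ' : (q τ) ≠ 0 := hqτ.ne'
      simp only [hqdef, hDdef] at hqτ' ⊢
      rw [eq_div_iff hqτ', sub_mul, sub_mul, div_mul_cancel₀ _ hqτ']
      ring
    have hid2 : 1 + (2 * D * τ / q τ - 1) = 2 * (D * τ) / q τ := by
      field_simp [hqτ.ne']
      ring
    have hgl : 2 * D * τ / q τ - 1 < 1 := by
      have h2 : 0 < 2 * ((1 - τ) * (1 - x ^ 2 * τ)) / q τ :=
        div_pos (by nlinarith) hqτ
      linarith [hid1 ▸ h2]
    have hgg : -1 < 2 * D * τ / q τ - 1 := by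
      have h2 : 0 < 2 * (D * τ) / q τ := div_pos (by nlinarith) hqτ
      linarith [hid2 ▸ h2]
    have hq' : HasDerivAt q (2 * x ^ 2 * τ - 2 * (x * c)) τ := by
      rw [hqdef]
      have h1 := (((hasDerivAt_pow 2 τ).const_mul (x ^ 2)).const_add 1).sub
        ((hasDerivAt_id τ).const_mul (2 * (x * c)))
      simp only [id_eq] at h1
      refine h1.congr_deriv ?_
      push_cast
      ring
    have hnum : HasDerivAt (fun τ : ℝ => 2 * D * τ) (2 * D) τ := by
      simpa using (hasDerivAt_id τ).const_mul (2 * D)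
    have hg' : HasDerivAt (fun τ => 2 * D * τ / q τ - 1)
        ((2 * D * q τ - 2 * D * τ * (2 * x ^ 2 * τ - 2 * (x * c))) / q τ ^ 2) τ :=
      (hnum.div hq' hqτ.ne').sub_const 1
    have hG' : HasDerivAt G ((Real.sqrt D)⁻¹ *
        (1 / Real.sqrt (1 - (2 * D * τ / q τ - 1) ^ 2) *
          ((2 * D * q τ - 2 * D * τ * (2 * x ^ 2 * τ - 2 * (x * c))) / q τ ^ 2))) τ := by
      rw [hGdef]
      exact ((Real.hasDerivAt_arcsin hgg.ne' hgl.ne).comp τ hg').const_mul _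
    have h1g : 1 - (2 * D * τ / q τ - 1) ^ 2
        = (2 * Real.sqrt ((1 - τ) * τ) * Real.sqrt (1 - x ^ 2 * τ) * Real.sqrt D / q τ) ^ 2 := by
      have e1 : 1 - (2 * D * τ / q τ - 1) ^ 2
          = (1 - (2 * D * τ / q τ - 1)) * (1 + (2 * D * τ / q τ - 1)) := by ring
      rw [e1, hid1, hid2, div_pow, mul_pow, mul_pow, mul_pow,
        Real.sq_sqrt hR1.le, Real.sq_sqrt hR2.le, Real.sq_sqrt hD.le]
      field_simp
    have hsq : Real.sqrt (1 - (2 * D * τ / q τ - 1) ^ 2)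
        = 2 * Real.sqrt ((1 - τ) * τ) * Real.sqrt (1 - x ^ 2 * τ) * Real.sqrt D / q τ := by
      rw [h1g, Real.sqrt_sq (by positivity)]
    have ha : 0 < Real.sqrt ((1 - τ) * τ) := Real.sqrt_pos.2 hR1
    have hb : 0 < Real.sqrt (1 - x ^ 2 * τ) := Real.sqrt_pos.2 hR2
    have hval : (Real.sqrt D)⁻¹ *
        (1 / Real.sqrt (1 - (2 * D * τ / q τ - 1) ^ 2) *
          ((2 * D * q τ - 2 * D * τ * (2 * x ^ 2 * τ - 2 * (x * c))) / q τ ^ 2))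
        = F x c τ := by
      rw [hsq]
      unfold F
      have hqτeq : 1 + x ^ 2 * τ ^ 2 - 2 * (x * c) * τ = q τ := by simp [hqdef]
      rw [hqτeq]
      set s := Real.sqrt D with hs
      set a := Real.sqrt ((1 - τ) * τ) with hadef
      set b := Real.sqrt (1 - x ^ 2 * τ) with hbdef
      have hDd : D = s * s := (Real.mul_self_sqrt hD.le).symm
      clear_value s a b
      have hnumq : 2 * D * q τ - 2 * D * τ * (2 * x ^ 2 * τ - 2 * (x * c))
          = 2 * D * (1 - x ^ 2 * τ ^ 2) := by
        simp only [hqdef]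
        ring
      rw [hnumq, hDd]
      field_simp [ha.ne', hb.ne', hqτ.ne', hsD.ne']
    exact (hval ▸ hG').hasDerivWithinAt
  have hint := key_integrable x c hx0 hx1 hc1 hc2
  rw [integral_eq_sub_of_hasDeriv_right_of_le (by norm_num) hcont hderiv hint]
  have hq1 : q 1 = D := by simp only [hqdef, hDdef]; ring
  have hq0 : q 0 = 1 := by simp only [hqdef]; ring
  have hG1 : G 1 = (Real.sqrt D)⁻¹ * (Real.pi / 2) := by
    have h2 : 2 * D * 1 / q 1 - 1 = 1 := by
      rw [hq1]
      field_simp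
      norm_num
    simp only [hGdef]
    rw [h2, Real.arcsin_one]
  have hG0 : G 0 = -((Real.sqrt D)⁻¹ * (Real.pi / 2)) := by
    have h0 : 2 * D * 0 / q 0 - 1 = -1 := by
      rw [hq0]
      norm_num
    simp only [hGdef]
    rw [h0, Real.arcsin_neg_one]
    ring
  rw [hG1, hG0]
  ring

end VNaux

/-- Integral representation of `V_n(x,θ)` for `0 ≤ x < 1`. -/
theorem VN_integral_repr (n : ℕ) (hn : 2 ≤ n) (x θ : ℝ) (hx0 : 0 ≤ x) (hx1 : x < 1) :
    VN n x θ = (1 / Real.pi) * ∫ τ in (0:ℝ)..1,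
      ((1 - τ) * τ) ^ (-(1:ℝ)/2) * (1 - x ^ 2 * τ) ^ (-(1:ℝ)/2) *
        ((1 - (x * τ) ^ (2 * n)) /
          (1 + (x * τ) ^ (2 * n) - 2 * (x * τ) ^ n * Real.cos (n * θ))) := by
  have hn0 : n ≠ 0 := by omega
  have hn0' : (n:ℝ) ≠ 0 := Nat.cast_ne_zero.2 hn0
  have hπ : (0:ℝ) < Real.pi := Real.pi_pos
  unfold VN
  have hterm : ∀ j ∈ Finset.Icc 1 n,
      (1 + x ^ 2 - 2 * x * Real.cos (2 * Real.pi * j / n + θ)) ^ (-(1:ℝ)/2)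
      = (1/Real.pi) * ∫ τ in (0:ℝ)..1, VNaux.F x (Real.cos (2 * Real.pi * j / n + θ)) τ := by
    intro j _
    set cj := Real.cos (2 * Real.pi * j / n + θ) with hcj
    have h1 : -1 ≤ cj := Real.neg_one_le_cos _
    have h2 : cj ≤ 1 := Real.cos_le_one _
    rw [VNaux.key_integral x cj hx0 hx1 h1 h2]
    rw [VNaux.rpow_neg_half_eq (le_of_lt (VNaux.D_pos hx0 hx1 h1 h2))]
    rw [← mul_assoc, one_div_mul_cancel hπ.ne', one_mul]
  rw [Finset.sum_congr rfl hterm, ← Finset.mul_sum,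
    ← intervalIntegral.integral_finset_sum
      (fun j _ => VNaux.key_integrable x _ hx0 hx1 (Real.neg_one_le_cos _) (Real.cos_le_one _))]
  have hcong : Set.EqOn
      (fun τ => ∑ j ∈ Finset.Icc 1 n, VNaux.F x (Real.cos (2 * Real.pi * j / n + θ)) τ)
      (fun τ => (n:ℝ) * (((1 - τ) * τ) ^ (-(1:ℝ)/2) * (1 - x ^ 2 * τ) ^ (-(1:ℝ)/2) *
        ((1 - (x * τ) ^ (2 * n)) /
          (1 + (x * τ) ^ (2 * n) - 2 * (x * τ) ^ n * Real.cos (n * θ)))))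
      (Set.uIcc 0 1) := by
    intro τ hτ
    rw [Set.uIcc_of_le (by norm_num : (0:ℝ) ≤ 1)] at hτ
    obtain ⟨ht0, ht1⟩ := hτ
    have hr0 : 0 ≤ x * τ := mul_nonneg hx0 ht0
    have hr1 : x * τ < 1 := by nlinarith
    simp only
    have hFeq : ∀ j ∈ Finset.Icc 1 n, VNaux.F x (Real.cos (2 * Real.pi * j / n + θ)) τ
        = (Real.sqrt ((1 - τ) * τ))⁻¹ * (Real.sqrt (1 - x ^ 2 * τ))⁻¹ *
          ((1 - (x * τ) ^ 2) /
            (1 + (x * τ) ^ 2 - 2 * (x * τ) * Real.cos (2 * Real.pi * j / n + θ))) := by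
      intro j _
      unfold VNaux.F
      have hq : 0 < 1 + x ^ 2 * τ ^ 2 - 2 * (x * Real.cos (2 * Real.pi * j / n + θ)) * τ :=
        VNaux.q_pos hx0 hx1 (Real.neg_one_le_cos _) (Real.cos_le_one _) ht0 ht1
      congr 1
      rw [div_eq_div_iff hq.ne' (by nlinarith [hq] : (1:ℝ) + (x * τ) ^ 2
        - 2 * (x * τ) * Real.cos (2 * Real.pi * j / n + θ) ≠ 0)]
      ring
    rw [Finset.sum_congr rfl hFeq, ← Finset.mul_sum,
      VNaux.poisson_sum n hn0 (x * τ) θ hr0 hr1,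
      VNaux.rpow_neg_half_eq (by nlinarith : (0:ℝ) ≤ (1 - τ) * τ),
      VNaux.rpow_neg_half_eq (by nlinarith : (0:ℝ) ≤ 1 - x ^ 2 * τ)]
    ring
  rw [intervalIntegral.integral_congr hcong, intervalIntegral.integral_const_mul]
  rw [mul_left_comm (1 / (n:ℝ)), ← mul_assoc (1 / (n:ℝ)), one_div_mul_cancel hn0', one_mul]
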